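/- Let X = ω(u, σ) be the ω-limit set of the sequence u (constructed from A_1 = 10111, A_{n+1} = A_n O_n A_n I_n A_n) under the shift σ on Σ_2, let a = 000... and b = 111..., and let f_0 ≡ a, F = {σ, f_0}. Then a and b are the only strongly nonwandering points of (X, F): for every x ∈ X \ {a, b} there is an open neighborhood V of x such that for all y ∈ X, limsup_{n→∞} (1/n)·#{0 ≤ i ≤ n−1 : F^i(y) ∩ V ≠ ∅} = 0. -/

import Mathlib

open Set Metric Filter TopologicalSpace

/-- The set of all `n`-fold compositions of members of `F = {f 0, …, f (m-1)}` applied to `x`. -/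
def iterSet {X : Type*} {m : ℕ} (f : Fin m → X → X) : ℕ → X → Set X
  | 0, x => {x}
  | n + 1, x => ⋃ i, iterSet f n (f i x)

/-- The words `A_n` over the alphabet `{0,1}` (`false = 0`, `true = 1`):
`A₁ = 10111` and `A_{n+1} = A_n O_n A_n I_n A_n`, where `O_n` (resp. `I_n`) is the constant-`0`
(resp. constant-`1`) word of the same length as `A_n`. (`Aword 0` is a dummy value.) -/
def Aword : ℕ → List Bool
  | 0 => []
  | 1 => [true, false, true, true, true]
  | n + 2 =>
      Aword (n + 1) ++ List.replicate (Aword (n + 1)).length false ++ Aword (n + 1)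
        ++ List.replicate (Aword (n + 1)).length true ++ Aword (n + 1)
def Sig2 : Type := ℕ → Bool

noncomputable def sdist (a b : Sig2) : ℝ :=
  ∑' i : ℕ, (if a i = b i then (0 : ℝ) else 1) / 2 ^ i

lemma sdist_term_nonneg (a b : Sig2) (i : ℕ) :
    0 ≤ (if a i = b i then (0 : ℝ) else 1) / 2 ^ i := by
  apply div_nonneg _ (by positivity)
  split <;> norm_num

lemma sdist_summable (a b : Sig2) :
    Summable fun i : ℕ => (if a i = b i then (0 : ℝ) else 1) / 2 ^ i := by
  refine Summable.of_nonneg_of_le (sdist_term_nonneg a b) (fun i => ?_)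
    summable_geometric_two
  rw [one_div, inv_pow, ← one_div]
  gcongr
  split <;> norm_num

noncomputable instance : MetricSpace Sig2 where
  dist := sdist
  dist_self a := by
    unfold sdist; simp
  dist_comm a b := by
    refine tsum_congr fun i => ?_
    by_cases h : a i = b i
    · rw [if_pos h, if_pos h.symm]
    · rw [if_neg h, if_neg fun h' => h h'.symm]
  dist_triangle a b c := by
    have key : ∀ i : ℕ, (if a i = c i then (0 : ℝ) else 1) / 2 ^ i ≤
        (if a i = b i then (0 : ℝ) else 1) / 2 ^ i
          + (if b i = c i then (0 : ℝ) else 1) / 2 ^ i := by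
      intro i
      by_cases hac : a i = c i
      · rw [if_pos hac, zero_div]
        exact add_nonneg (sdist_term_nonneg a b i) (sdist_term_nonneg b c i)
      · have h : ¬ a i = b i ∨ ¬ b i = c i := by
          by_contra hcon
          push_neg at hcon
          exact hac (hcon.1.trans hcon.2)
        rcases h with h | h
        · rw [if_neg hac, if_neg h]
          have := sdist_term_nonneg b c i
          linarith
        · rw [if_neg hac, if_neg h]
          have := sdist_term_nonneg a b i
          linarith
    calc sdist a c ≤ ∑' i : ℕ, ((if a i = b i then (0 : ℝ) else 1) / 2 ^ i
          + (if b i = c i then (0 : ℝ) else 1) / 2 ^ i) :=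
        Summable.tsum_le_tsum key (sdist_summable a c) ((sdist_summable a b).add (sdist_summable b c))
      _ = sdist a b + sdist b c := Summable.tsum_add (sdist_summable a b) (sdist_summable b c)
  eq_of_dist_eq_zero := by
    intro a b h
    funext i
    by_contra hne
    have hle := Summable.le_tsum (sdist_summable a b) i fun j _ => sdist_term_nonneg a b j
    rw [show (∑' i : ℕ, (if a i = b i then (0 : ℝ) else 1) / 2 ^ i) = 0 from h] at hle
    rw [if_neg hne] at hle
    have : (0 : ℝ) < 1 / 2 ^ i := by positivity
    exact absurd hle (not_le.mpr this)

/-- The shift map `σ` on `Σ₂`. -/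
def shiftS (x : Sig2) : Sig2 := fun n => x (n + 1)

/-- The ω-limit set of the point `u` under the shift `σ`. -/
def omegaLim (u : Sig2) : Set Sig2 :=
  ⋂ n : ℕ, closure {y : Sig2 | ∃ k : ℕ, n ≤ k ∧ y = shiftS^[k] u}

/-- The constant-`0` sequence `a = 000⋯`. -/
def aseq : Sig2 := fun _ => false

/-- The constant-`1` sequence `b = 111⋯`. -/
def bseq : Sig2 := fun _ => true

/-- The sequence `u` extending all the words `A_n`, viewed as a point of `Σ₂`. -/
def useqS : Sig2 := fun i => (Aword (i + 1)).getD i false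

/-- The multiple mapping `F = {σ, f₀}` where `f₀ ≡ a` is constant. -/
def Fsig : Fin 2 → Sig2 → Sig2 := ![shiftS, fun _ => aseq]

/-- Let `X = ω(u, σ)` and `F = {σ, f₀}` with `f₀ ≡ a`. Then `a = 000⋯` and `b = 111⋯` are
strongly nonwandering points of `(X, F)`, and they are the only ones: every `x ∈ X ∖ {a, b}`
has an open neighborhood `V` such that for every `y ∈ X`,
`limsup_n (1/n)·#{0 ≤ i ≤ n-1 : F^i(y) ∩ V ≠ ∅} = 0`. -/
lemma dist_sig2 (a b : Sig2) : dist a b = sdist a b := rfl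

lemma agree_of_dist_lt {a b : Sig2} {N : ℕ} (h : dist a b < 1 / 2 ^ N) :
    ∀ i ≤ N, a i = b i := by
  intro i hi
  by_contra hne
  have hle := Summable.le_tsum (sdist_summable a b) i fun j _ => sdist_term_nonneg a b j
  rw [if_neg hne] at hle
  have h2 : (1:ℝ) / 2 ^ N ≤ 1 / 2 ^ i := by
    apply one_div_le_one_div_of_le (by positivity)
    exact pow_le_pow_right₀ (by norm_num) hi
  have : (1:ℝ) / 2 ^ N ≤ dist a b := le_trans h2 hle
  linarith

lemma dist_le_of_agree {a b : Sig2} {N : ℕ} (h : ∀ i < N, a i = b i) :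
    dist a b ≤ 2 / 2 ^ N := by
  have hsum := Summable.sum_add_tsum_nat_add N (sdist_summable a b)
  have h1 : ∑ i ∈ Finset.range N, (if a i = b i then (0:ℝ) else 1) / 2 ^ i = 0 := by
    apply Finset.sum_eq_zero
    intro i hi
    rw [if_pos (h i (Finset.mem_range.mp hi)), zero_div]
  have h2 : ∑' i : ℕ, (if a (i + N) = b (i + N) then (0:ℝ) else 1) / 2 ^ (i + N)
      ≤ ∑' i : ℕ, (1/2:ℝ) ^ N * (1/2) ^ i := by
    apply Summable.tsum_le_tsum _ ((sdist_summable a b).comp_injective (add_left_injective N))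
      (summable_geometric_two.mul_left _)
    intro i
    have : (if a (i + N) = b (i + N) then (0:ℝ) else 1) / 2 ^ (i + N) ≤ 1 / 2 ^ (i + N) := by
      refine (div_le_div_iff_of_pos_right (by positivity)).mpr ?_
      split <;> norm_num
    calc (if a (i + N) = b (i + N) then (0:ℝ) else 1) / 2 ^ (i + N) ≤ 1 / 2 ^ (i + N) := this
      _ = (1/2:ℝ) ^ N * (1/2) ^ i := by rw [← one_div_pow, ← pow_add, add_comm]
  have h3 : ∑' i : ℕ, (1/2:ℝ) ^ N * (1/2) ^ i = 2 / 2 ^ N := by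
    rw [tsum_mul_left, tsum_geometric_two]
    rw [div_pow, one_pow]
    ring
  calc dist a b = sdist a b := rfl
    _ = ∑ i ∈ Finset.range N, (if a i = b i then (0:ℝ) else 1) / 2 ^ i
        + ∑' i : ℕ, (if a (i + N) = b (i + N) then (0:ℝ) else 1) / 2 ^ (i + N) := hsum.symm
    _ ≤ 0 + 2 / 2 ^ N := by rw [h1]; exact add_le_add_right (h2.trans_eq h3) 0
    _ = 2 / 2 ^ N := by ring

lemma shift_iter (k : ℕ) (z : Sig2) (j : ℕ) : shiftS^[k] z j = z (j + k) := by
  induction k generalizing z j with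
  | zero => rfl
  | succ n ih =>
    rw [Function.iterate_succ_apply, ih]
    show z (j + n + 1) = z (j + (n+1))
    ring_nf
lemma Aword_length : ∀ n, (Aword (n+1)).length = 5 ^ (n+1) := by
  intro n
  induction n with
  | zero => rfl
  | succ m ih =>
    show (Aword (m+2)).length = 5 ^ (m+2)
    rw [Aword]
    simp [List.length_append, ih]
    ring

lemma Aword_prefix : ∀ n m, n ≤ m → Aword (n+1) <+: Aword (m+1) := by
  intro n m h
  induction m with
  | zero => rw [Nat.le_zero.mp h]
  | succ k ih =>
    rcases Nat.lt_or_ge n (k+1) with h' | h'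
    · refine (ih (Nat.lt_succ_iff.mp h')).trans ?_
      rw [show k + 1 + 1 = k + 2 from rfl, Aword]
      simpa using (Aword (k+1)).prefix_append _
    · rw [le_antisymm h h']

lemma getD_prefix {l₁ l₂ : List Bool} (h : l₁ <+: l₂) {i : ℕ} (hi : i < l₁.length) :
    l₁.getD i false = l₂.getD i false := by
  rw [List.getD_eq_getElem _ _ hi, List.getD_eq_getElem _ _ (hi.trans_le h.length_le)]
  exact (List.IsPrefix.getElem h hi)

lemma useq_eq (m i : ℕ) (hi : i < 5 ^ (m+1)) :
    useqS i = (Aword (m+1)).getD i false := by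
  show (Aword (i+1)).getD i false = _
  rcases Nat.le_total i m with h | h
  · exact getD_prefix (Aword_prefix i m h)
      (by rw [Aword_length]; exact Nat.lt_pow_self (n := i+1) (by norm_num : 1 < 5) |>.trans_le' (by omega))
  · exact (getD_prefix (Aword_prefix m i h) (by rw [Aword_length]; exact hi)).symm

lemma Aword_entry (k : ℕ) (r i : ℕ) (hr : r < 5) (hi : i < 5 ^ (k+1)) :
    (Aword (k+2)).getD (r * 5 ^ (k+1) + i) false =
      if r = 1 then false else if r = 3 then true else (Aword (k+1)).getD i false := by
  rw [Aword]
  set A := Aword (k+1) with hA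
  have hL : A.length = 5 ^ (k+1) := Aword_length k
  have h1 : (A ++ List.replicate A.length false).length = 2 * 5 ^ (k+1) := by
    simp [hL]; ring
  have h2 : (A ++ List.replicate A.length false ++ A).length = 3 * 5 ^ (k+1) := by
    simp [hL]; ring
  have h3 : (A ++ List.replicate A.length false ++ A ++ List.replicate A.length true).length
      = 4 * 5 ^ (k+1) := by simp [hL]; ring
  interval_cases r
  · rw [if_neg (by norm_num), if_neg (by norm_num), zero_mul, zero_add]
    rw [List.getD_append _ _ _ _ (by omega), List.getD_append _ _ _ _ (by omega),
      List.getD_append _ _ _ _ (by omega), List.getD_append _ _ _ _ (by omega)]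
  · rw [if_pos rfl]
    rw [List.getD_append _ _ _ _ (by omega), List.getD_append _ _ _ _ (by omega),
      List.getD_append _ _ _ _ (by omega), List.getD_append_right _ _ _ _ (by omega)]
    rw [List.getD_eq_getElem _ _ (by simp only [List.length_replicate, hL]; omega),
      List.getElem_replicate]
  · rw [if_neg (by norm_num), if_neg (by norm_num)]
    rw [List.getD_append _ _ _ _ (by omega), List.getD_append _ _ _ _ (by omega),
      List.getD_append_right _ _ _ _ (by omega)]
    congr 1
    omega
  · rw [if_neg (by norm_num), if_pos rfl]
    rw [List.getD_append _ _ _ _ (by omega),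
      List.getD_append_right _ _ _ _ (by omega)]
    rw [List.getD_eq_getElem _ _ (by simp only [List.length_replicate]; omega),
      List.getElem_replicate]
  · rw [if_neg (by norm_num), if_neg (by norm_num)]
    rw [List.getD_append_right _ _ _ _ (by omega)]
    congr 1
    omega
/-- Block type of the level-`k` block at index `q` in `u`. -/
def Blk (k q : ℕ) : Prop :=
  (∀ i < 5 ^ k, useqS (q * 5 ^ k + i) = (Aword k).getD i false) ∨
  (∀ i < 5 ^ k, useqS (q * 5 ^ k + i) = false) ∨
  (∀ i < 5 ^ k, useqS (q * 5 ^ k + i) = true)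

lemma blk_zero (k : ℕ) : Blk (k+1) 0 := by
  left
  intro i hi
  rw [zero_mul, zero_add]
  exact useq_eq k i hi

lemma blk_step {k q' : ℕ} (h : Blk (k+2) q') (r : ℕ) (hr : r < 5) :
    Blk (k+1) (5 * q' + r) := by
  have key : ∀ i < 5 ^ (k+1), (5 * q' + r) * 5 ^ (k+1) + i
      = q' * 5 ^ (k+2) + (r * 5 ^ (k+1) + i) := by
    intro i _
    rw [pow_succ]
    ring
  have hlt : ∀ i, i < 5 ^ (k+1) → r * 5 ^ (k+1) + i < 5 ^ (k+2) := by
    intro i hi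
    have e1 : (5:ℕ) ^ (k+2) = 5 * 5 ^ (k+1) := by ring
    have e2 : r * 5 ^ (k+1) ≤ 4 * 5 ^ (k+1) := Nat.mul_le_mul_right _ (by omega)
    omega
  rcases h with h | h | h
  · -- A-type
    have h' : ∀ i < 5 ^ (k+1), useqS ((5 * q' + r) * 5 ^ (k+1) + i)
        = (Aword (k+2)).getD (r * 5 ^ (k+1) + i) false := by
      intro i hi
      rw [key i hi]
      exact h _ (hlt i hi)
    by_cases h1 : r = 1
    · right; left
      intro i hi
      rw [h' i hi, Aword_entry k r i hr hi, if_pos h1]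
    · by_cases h3 : r = 3
      · right; right
        intro i hi
        rw [h' i hi, Aword_entry k r i hr hi, if_neg h1, if_pos h3]
      · left
        intro i hi
        rw [h' i hi, Aword_entry k r i hr hi, if_neg h1, if_neg h3]
  · right; left
    intro i hi
    rw [key i hi]
    exact h _ (hlt i hi)
  · right; right
    intro i hi
    rw [key i hi]
    exact h _ (hlt i hi)

lemma blk_all (k q : ℕ) : Blk (k+1) q := by
  have main : ∀ j k q, q < 5 ^ j → Blk (k+1) q := by
    intro j
    induction j with
    | zero =>
      intro k q hq
      interval_cases q
      exact blk_zero k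
    | succ j ih =>
      intro k q hq
      have hq5 : q / 5 < 5 ^ j := by
        rw [Nat.div_lt_iff_lt_mul (by norm_num)]
        calc q < 5 ^ (j+1) := hq
          _ = 5 ^ j * 5 := by ring
      have := blk_step (ih (k+1) (q/5) hq5) (q % 5) (Nat.mod_lt _ (by norm_num))
      rwa [Nat.div_add_mod] at this
  exact main q k q (Nat.lt_pow_self (n := q) (by norm_num))
/-- Number of adjacent flips of `u` in the window `[m, m+n)`. -/
def flipCount (m n : ℕ) : ℕ :=
  ((Finset.range n).filter (fun i => useqS (m + i) ≠ useqS (m + i + 1))).card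

lemma flip_le (m n : ℕ) : flipCount m n ≤ n :=
  (Finset.card_filter_le _ _).trans (Finset.card_range n).le

lemma flip_add (m n1 n2 : ℕ) :
    flipCount m (n1 + n2) = flipCount m n1 + flipCount (m + n1) n2 := by
  induction n2 with
  | zero => simp [flipCount]
  | succ n ih =>
    rw [show n1 + (n + 1) = (n1 + n) + 1 from rfl]
    unfold flipCount at *
    rw [Finset.range_add_one, Finset.filter_insert, Finset.range_add_one, Finset.filter_insert]
    have harith : m + n1 + n = m + (n1 + n) := by omega
    by_cases h : useqS (m + (n1 + n)) ≠ useqS (m + (n1 + n) + 1)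
    · rw [if_pos h, if_pos (by rw [harith]; exact h)]
      rw [Finset.card_insert_of_notMem (by simp), Finset.card_insert_of_notMem (by simp)]
      omega
    · rw [if_neg h, if_neg (by rw [harith]; exact h)]
      omega

lemma flip_const {m n : ℕ} {c : Bool} (h : ∀ i ≤ n, useqS (m + i) = c) :
    flipCount m n = 0 := by
  unfold flipCount
  rw [Finset.card_eq_zero, Finset.filter_eq_empty_iff]
  intro i hi
  rw [Finset.mem_range] at hi
  simp only [ne_eq, not_not]
  rw [h i hi.le, show m + i + 1 = m + (i+1) from rfl, h (i+1) hi]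

lemma flip_mono {m n m' n' : ℕ} (h1 : m' ≤ m) (h2 : m + n ≤ m' + n') :
    flipCount m n ≤ flipCount m' n' := by
  have e1 : n' = (m - m') + (n + (m' + n' - (m + n))) := by omega
  rw [e1, flip_add, flip_add, show m' + (m - m') = m by omega]
  omega

lemma flip_five (M p : ℕ) (hp : 1 ≤ p) :
    flipCount M (5 * p - 1) ≤ flipCount M (p-1) + flipCount (M + p) (p-1)
      + flipCount (M + 2*p) (p-1) + flipCount (M + 3*p) (p-1)
      + flipCount (M + 4*p) (p-1) + 4 := by
  have e : 5*p - 1 = (p-1) + (1 + ((p-1) + (1 + ((p-1) + (1 + ((p-1) + (1 + (p-1)))))))) := by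
    omega
  rw [e, flip_add, flip_add, show M + (p-1) + 1 = M + p by omega,
    flip_add, flip_add, show M + p + (p-1) + 1 = M + 2*p by omega,
    flip_add, flip_add, show M + 2*p + (p-1) + 1 = M + 3*p by omega,
    flip_add, flip_add, show M + 3*p + (p-1) + 1 = M + 4*p by omega]
  have f1 := flip_le (M + (p-1)) 1
  have f2 := flip_le (M + p + (p-1)) 1
  have f3 := flip_le (M + 2*p + (p-1)) 1
  have f4 := flip_le (M + 3*p + (p-1)) 1
  omega

lemma blk_flip : ∀ k q, flipCount (q * 5 ^ (k+1)) (5 ^ (k+1) - 1) ≤ 2 * 3 ^ (k+1) - 2 := by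
  intro k
  induction k with
  | zero =>
    intro q
    calc flipCount (q * 5 ^ 1) (5 ^ 1 - 1) ≤ 5 ^ 1 - 1 := flip_le _ _
      _ ≤ 2 * 3 ^ 1 - 2 := by norm_num
  | succ k ih =>
    intro q
    show flipCount (q * 5 ^ (k+2)) (5 ^ (k+2) - 1) ≤ 2 * 3 ^ (k+2) - 2
    have hp : 1 ≤ (5:ℕ) ^ (k+1) := Nat.one_le_pow _ _ (by norm_num)
    have h52 : (5:ℕ) ^ (k+2) = 5 * 5 ^ (k+1) := by ring
    have h32 : (3:ℕ) ^ (k+2) = 3 * 3 ^ (k+1) := by ring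
    have h3p : 1 ≤ (3:ℕ) ^ (k+1) := Nat.one_le_pow _ _ (by norm_num)
    rcases blk_all (k+1) q with h | h | h
    all_goals rw [show k+1+1 = k+2 from rfl] at h
    · -- A-type block
      have hstart : ∀ r : ℕ, q * 5 ^ (k+2) + r * 5 ^ (k+1) = (5*q+r) * 5 ^ (k+1) := by
        intro r
        rw [pow_succ]
        ring
      have hdec := flip_five (q * 5 ^ (k+2)) (5 ^ (k+1)) hp
      rw [show q * 5^(k+2) + 5^(k+1) = (5*q+1) * 5^(k+1) by rw [pow_succ]; ring,
        hstart 2, hstart 3, hstart 4] at hdec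
      have hb0 := ih (5*q)
      have hb2 := ih (5*q+2)
      have hb4 := ih (5*q+4)
      have hc1 : flipCount ((5*q+1) * 5 ^ (k+1)) (5 ^ (k+1) - 1) = 0 := by
        apply flip_const (c := false)
        intro i hi
        have hi' : i < 5 ^ (k+1) := by omega
        have : (5*q+1) * 5 ^ (k+1) + i = q * 5 ^ (k+2) + (1 * 5 ^ (k+1) + i) := by
          rw [pow_succ]; ring
        rw [this, h _ (by omega), Aword_entry k 1 i (by norm_num) hi', if_pos rfl]
      have hc3 : flipCount ((5*q+3) * 5 ^ (k+1)) (5 ^ (k+1) - 1) = 0 := by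
        apply flip_const (c := true)
        intro i hi
        have hi' : i < 5 ^ (k+1) := by omega
        have : (5*q+3) * 5 ^ (k+1) + i = q * 5 ^ (k+2) + (3 * 5 ^ (k+1) + i) := by
          rw [pow_succ]; ring
        rw [this, h _ (by omega), Aword_entry k 3 i (by norm_num) hi',
          if_neg (by norm_num), if_pos rfl]
      rw [show q * 5 ^ (k+2) = (5*q) * 5 ^ (k+1) by rw [pow_succ]; ring] at hdec ⊢
      rw [show (5:ℕ) ^ (k+2) - 1 = 5 * 5 ^ (k+1) - 1 by omega]
      omega
    · -- constant false block
      have : flipCount (q * 5 ^ (k+2)) (5 ^ (k+2) - 1) = 0 := by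
        apply flip_const (c := false)
        intro i hi
        exact h i (by omega)
      omega
    · have : flipCount (q * 5 ^ (k+2)) (5 ^ (k+2) - 1) = 0 := by
        apply flip_const (c := true)
        intro i hi
        exact h i (by omega)
      omega

lemma flip_window (k m n : ℕ) (hn : n ≤ 5 ^ (k+1)) : flipCount m n ≤ 4 * 3 ^ (k+1) := by
  have hp : 1 ≤ (5:ℕ) ^ (k+1) := Nat.one_le_pow _ _ (by norm_num)
  have h3p : 1 ≤ (3:ℕ) ^ (k+1) := Nat.one_le_pow _ _ (by norm_num)
  set p := (5:ℕ) ^ (k+1) with hpdef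
  set q := m / p with hq
  have hqm : q * p + m % p = m := Nat.div_add_mod' m p
  have hmod : m % p < p := Nat.mod_lt m (show 0 < p by omega)
  have hqp : (q+1) * p = q * p + p := by ring
  have h1 : q * p ≤ m := by omega
  have h2 : m < (q+1) * p := by omega
  have hmain : flipCount m n ≤ flipCount (q * p) (2 * p) := flip_mono (by omega) (by omega)
  have e : 2 * p = (p-1) + (1 + ((p-1) + 1)) := by omega
  rw [e, flip_add, flip_add, show q * p + (p-1) + 1 = (q+1) * p by omega, flip_add] at hmain
  have b1 := blk_flip k q
  have b2 := blk_flip k (q+1)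
  rw [← hpdef] at b1 b2
  have f1 := flip_le (q * p + (p - 1)) 1
  have f2 := flip_le ((q+1) * p + (p - 1)) 1
  omega
lemma shift_fixed_a : shiftS aseq = aseq := rfl
lemma shift_fixed_b : shiftS bseq = bseq := rfl

lemma useq_zero_block (k i : ℕ) (hi : i < 5 ^ (k+1)) : useqS (5 ^ (k+1) + i) = false := by
  have h52 : (5:ℕ) ^ (k+2) = 5 * 5 ^ (k+1) := by ring
  have h : 5 ^ (k+1) + i < 5 ^ ((k+1)+1) := by rw [show (k+1)+1 = k+2 from rfl]; omega
  rw [useq_eq (k+1) _ h, show (k+1)+1 = k+2 from rfl]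
  have := Aword_entry k 1 i (by norm_num) hi
  rw [one_mul] at this
  rw [this, if_pos rfl]

lemma useq_one_block (k i : ℕ) (hi : i < 5 ^ (k+1)) : useqS (3 * 5 ^ (k+1) + i) = true := by
  have h52 : (5:ℕ) ^ (k+2) = 5 * 5 ^ (k+1) := by ring
  have h : 3 * 5 ^ (k+1) + i < 5 ^ ((k+1)+1) := by rw [show (k+1)+1 = k+2 from rfl]; omega
  rw [useq_eq (k+1) _ h, show (k+1)+1 = k+2 from rfl]
  rw [Aword_entry k 3 i (by norm_num) hi, if_neg (by norm_num), if_pos rfl]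

lemma exists_small (ε : ℝ) (hε : 0 < ε) : ∃ N : ℕ, 2 / 2 ^ N < ε := by
  obtain ⟨N, hN⟩ := exists_pow_lt_of_lt_one (half_pos hε) (show (1/2:ℝ) < 1 by norm_num)
  refine ⟨N, ?_⟩
  have : ((1:ℝ)/2) ^ N = 1 / 2 ^ N := by rw [div_pow, one_pow]
  rw [this] at hN
  rw [div_lt_iff₀ (by positivity)] at hN ⊢
  linarith [hN]

lemma aseq_mem : aseq ∈ omegaLim useqS := by
  rw [omegaLim, mem_iInter]
  intro n
  rw [Metric.mem_closure_iff]
  intro ε hε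
  obtain ⟨N, hN⟩ := exists_small ε hε
  set k := max n N with hk
  have hk5 : k ≤ 5 ^ (k+1) := ((Nat.lt_pow_self (n := k) (by norm_num : 1 < 5)).trans_le
    (Nat.pow_le_pow_right (by norm_num) (by omega))).le
  refine ⟨shiftS^[5 ^ (k+1)] useqS, ⟨5 ^ (k+1), by omega, rfl⟩, ?_⟩
  have hagree : ∀ i < 5 ^ (k+1), aseq i = (shiftS^[5 ^ (k+1)] useqS) i := by
    intro i hi
    rw [shift_iter, show i + 5 ^ (k+1) = 5 ^ (k+1) + i by omega, useq_zero_block k i hi]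
    rfl
  calc dist aseq (shiftS^[5 ^ (k+1)] useqS) ≤ 2 / 2 ^ (5 ^ (k+1)) := dist_le_of_agree hagree
    _ ≤ 2 / 2 ^ N := div_le_div_of_nonneg_left (by norm_num) (by positivity)
        (pow_le_pow_right₀ (by norm_num) ((le_max_right n N).trans hk5))
    _ < ε := hN

lemma bseq_mem : bseq ∈ omegaLim useqS := by
  rw [omegaLim, mem_iInter]
  intro n
  rw [Metric.mem_closure_iff]
  intro ε hε
  obtain ⟨N, hN⟩ := exists_small ε hε
  set k := max n N with hk
  have hk5 : k ≤ 5 ^ (k+1) := ((Nat.lt_pow_self (n := k) (by norm_num : 1 < 5)).trans_le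
    (Nat.pow_le_pow_right (by norm_num) (by omega))).le
  refine ⟨shiftS^[3 * 5 ^ (k+1)] useqS, ⟨3 * 5 ^ (k+1), by omega, rfl⟩, ?_⟩
  have hagree : ∀ i < 5 ^ (k+1), bseq i = (shiftS^[3 * 5 ^ (k+1)] useqS) i := by
    intro i hi
    rw [shift_iter, show i + 3 * 5 ^ (k+1) = 3 * 5 ^ (k+1) + i by omega,
      useq_one_block k i hi]
    rfl
  calc dist bseq (shiftS^[3 * 5 ^ (k+1)] useqS) ≤ 2 / 2 ^ (5 ^ (k+1)) :=
      dist_le_of_agree hagree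
    _ ≤ 2 / 2 ^ N := div_le_div_of_nonneg_left (by norm_num) (by positivity)
        (pow_le_pow_right₀ (by norm_num) ((le_max_right n N).trans hk5))
    _ < ε := hN

lemma Fsig_zero : Fsig 0 = shiftS := rfl
lemma Fsig_one (z : Sig2) : Fsig 1 z = aseq := rfl

lemma iterSet_self_a (i : ℕ) : aseq ∈ iterSet Fsig i aseq := by
  induction i with
  | zero => exact rfl
  | succ n ih =>
    show aseq ∈ ⋃ j, iterSet Fsig n (Fsig j aseq)
    exact mem_iUnion.mpr ⟨0, by rw [Fsig_zero, shift_fixed_a]; exact ih⟩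

lemma iterSet_self_b (i : ℕ) : bseq ∈ iterSet Fsig i bseq := by
  induction i with
  | zero => exact rfl
  | succ n ih =>
    show bseq ∈ ⋃ j, iterSet Fsig n (Fsig j bseq)
    exact mem_iUnion.mpr ⟨0, by rw [Fsig_zero, shift_fixed_b]; exact ih⟩

lemma iterSet_subset (i : ℕ) : ∀ y : Sig2, iterSet Fsig i y ⊆ {shiftS^[i] y} ∪ {aseq} := by
  induction i with
  | zero => intro y; exact subset_union_left
  | succ n ih =>
    intro y
    show (⋃ j, iterSet Fsig n (Fsig j y)) ⊆ _
    apply iUnion_subset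
    intro j
    fin_cases j
    · show iterSet Fsig n (shiftS y) ⊆ _
      refine (ih (shiftS y)).trans ?_
      rw [← Function.iterate_succ_apply]
    · show iterSet Fsig n aseq ⊆ _
      refine (ih aseq).trans ?_
      rw [Function.iterate_fixed shift_fixed_a]
      simp

lemma limsup_one_of_fixed {y : Sig2} (hfix : ∀ i, y ∈ iterSet Fsig i y) {V : Set Sig2}
    (hyV : y ∈ V) :
    Filter.limsup (fun n : ℕ =>
      (({i : ℕ | i < n ∧ (iterSet Fsig i y ∩ V).Nonempty}).ncard : ℝ) / n) Filter.atTop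
      = 1 := by
  have hset : ∀ n : ℕ, {i : ℕ | i < n ∧ (iterSet Fsig i y ∩ V).Nonempty} = Set.Iio n := by
    intro n
    ext i
    simp only [mem_setOf_eq, mem_Iio, and_iff_left_iff_imp]
    exact fun _ => ⟨y, hfix i, hyV⟩
  have hcard : ∀ n : ℕ, ({i : ℕ | i < n ∧ (iterSet Fsig i y ∩ V).Nonempty}).ncard = n := by
    intro n
    rw [hset n, ← Finset.coe_Iio, Set.ncard_coe_finset, Nat.card_Iio]
  apply Filter.Tendsto.limsup_eq
  apply Filter.Tendsto.congr' _ tendsto_const_nhds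
  filter_upwards [Filter.eventually_atTop.mpr ⟨1, fun n hn => hn⟩] with n hn
  rw [hcard n, div_self (by positivity)]
lemma factor_of_mem {y : Sig2} (hy : y ∈ omegaLim useqS) (L : ℕ) :
    ∃ m, ∀ j ≤ L, y j = useqS (j + m) := by
  have h0 := mem_iInter.mp hy 0
  rw [Metric.mem_closure_iff] at h0
  obtain ⟨z, ⟨m, -, rfl⟩, hz⟩ := h0 (1 / 2 ^ L) (by positivity)
  exact ⟨m, fun j hj => (agree_of_dist_lt hz j hj).trans (shift_iter m useqS j)⟩

lemma flips_y {y : Sig2} (hy : y ∈ omegaLim useqS) (K n k : ℕ) (hn : n ≤ 5 ^ (k+1)) :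
    ((Finset.range n).filter (fun i => y (K + i) ≠ y (K + i + 1))).card ≤ 4 * 3 ^ (k+1) := by
  obtain ⟨m, hm⟩ := factor_of_mem hy (K + n)
  have hm' : ∀ j ≤ n, y (K + j) = useqS (K + m + j) := fun j hj =>
    (hm (K + j) (by omega)).trans (congrArg useqS (by omega))
  have key : ∀ i ∈ Finset.range n,
      ((y (K + i) ≠ y (K + i + 1)) ↔ (useqS (K + m + i) ≠ useqS (K + m + i + 1))) := by
    intro i hi
    rw [Finset.mem_range] at hi
    rw [show K + i + 1 = K + (i+1) by omega, hm' i (by omega), hm' (i+1) (by omega),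
      show K + m + (i+1) = K + m + i + 1 by omega]
  rw [Finset.filter_congr key]
  exact flip_window k (K + m) n hn

lemma clog_tendsto : Filter.Tendsto (fun n : ℕ => Nat.clog 5 n - 1) Filter.atTop Filter.atTop := by
  rw [Filter.tendsto_atTop_atTop]
  intro b
  refine ⟨5 ^ (b+1) + 1, fun n hn => ?_⟩
  have : 5 ^ (b+1) < n := by omega
  have := (Nat.lt_clog_iff_pow_lt (by norm_num)).mpr this
  omega

lemma density_zero {y : Sig2} (hy : y ∈ omegaLim useqS) {V : Set Sig2} {K : ℕ}
    (hV : ∀ z : Sig2, z ∈ V → z K ≠ z (K+1)) (haV : aseq ∉ V) :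
    Filter.Tendsto (fun n : ℕ =>
      (({i : ℕ | i < n ∧ (iterSet Fsig i y ∩ V).Nonempty}).ncard : ℝ) / n)
      Filter.atTop (nhds 0) := by
  set g := fun n : ℕ =>
    (({i : ℕ | i < n ∧ (iterSet Fsig i y ∩ V).Nonempty}).ncard : ℝ) / n with hg
  have hsub : ∀ n : ℕ, {i : ℕ | i < n ∧ (iterSet Fsig i y ∩ V).Nonempty} ⊆
      ↑((Finset.range n).filter (fun i => y (K + i) ≠ y (K + i + 1))) := by
    intro n i ⟨hin, w, hw1, hw2⟩
    have := iterSet_subset i y hw1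
    rcases this with h | h
    · rw [mem_singleton_iff] at h
      subst h
      have h1 := hV _ hw2
      rw [shift_iter, shift_iter] at h1
      simp only [Finset.coe_filter, Finset.mem_range, mem_setOf_eq]
      refine ⟨hin, ?_⟩
      intro hc
      apply h1
      rw [show K + i = K + i by rfl]
      convert hc using 2
      omega
    · rw [mem_singleton_iff] at h
      subst h
      exact absurd hw2 haV
  have hcard : ∀ n : ℕ, ({i : ℕ | i < n ∧ (iterSet Fsig i y ∩ V).Nonempty}).ncard ≤
      ((Finset.range n).filter (fun i => y (K + i) ≠ y (K + i + 1))).card := by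
    intro n
    rw [← Set.ncard_coe_finset]
    exact Set.ncard_le_ncard (hsub n) (Finset.finite_toSet _)
  apply squeeze_zero' (g := fun n : ℕ => 12 * (3/5 : ℝ) ^ (Nat.clog 5 n - 1))
  · filter_upwards with n
    positivity
  · filter_upwards [Filter.eventually_atTop.mpr ⟨2, fun n hn => hn⟩] with n hn
    set k := Nat.clog 5 n - 1 with hkdef
    have hk1 : Nat.clog 5 n = k + 1 := by
      have : 0 < Nat.clog 5 n := Nat.clog_pos (by norm_num) (by omega)
      omega
    have hup : n ≤ 5 ^ (k+1) := by
      rw [← hk1]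
      exact Nat.le_pow_clog (by norm_num) n
    have hlow : 5 ^ k < n := by
      have := Nat.pow_pred_clog_lt_self (show 1 < 5 by norm_num) (show 1 < n by omega)
      rwa [Nat.pred_eq_sub_one, ← hkdef] at this
    have hflip := (hcard n).trans (flips_y hy K n k hup)
    have hn0 : (0:ℝ) < n := by positivity -- n ≥ 2
    calc g n ≤ (4 * 3 ^ (k+1) : ℝ) / n := by
          simp only [hg]
          apply (div_le_div_iff_of_pos_right hn0).mpr
          calc (({i : ℕ | i < n ∧ (iterSet Fsig i y ∩ V).Nonempty}).ncard : ℝ)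
              ≤ ((4 * 3 ^ (k+1) : ℕ) : ℝ) := by exact_mod_cast hflip
            _ = (4 * 3 ^ (k+1) : ℝ) := by push_cast; ring
      _ ≤ (4 * 3 ^ (k+1) : ℝ) / (5 ^ k : ℕ) := by
          apply div_le_div_of_nonneg_left (by positivity) (by positivity)
          exact_mod_cast hlow.le
      _ = 12 * (3/5 : ℝ) ^ k := by
          push_cast
          rw [div_pow, pow_succ]
          ring
  · have h1 : Filter.Tendsto (fun j : ℕ => (3/5 : ℝ) ^ j) Filter.atTop (nhds 0) :=
      tendsto_pow_atTop_nhds_zero_of_lt_one (by norm_num) (by norm_num)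
    have := (h1.comp clog_tendsto).const_mul (12:ℝ)
    simpa using this
theorem only_two_strongly_nonwandering_points :
    aseq ∈ omegaLim useqS ∧ bseq ∈ omegaLim useqS ∧
    (∀ V : Set Sig2, IsOpen V → aseq ∈ V →
      ∃ y ∈ omegaLim useqS,
        0 < Filter.limsup (fun n : ℕ =>
          (({i : ℕ | i < n ∧ (iterSet Fsig i y ∩ V).Nonempty}).ncard : ℝ) / n)
          Filter.atTop) ∧
    (∀ V : Set Sig2, IsOpen V → bseq ∈ V →
      ∃ y ∈ omegaLim useqS,
        0 < Filter.limsup (fun n : ℕ =>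
          (({i : ℕ | i < n ∧ (iterSet Fsig i y ∩ V).Nonempty}).ncard : ℝ) / n)
          Filter.atTop) ∧
    (∀ x ∈ omegaLim useqS, x ≠ aseq → x ≠ bseq →
      ∃ V : Set Sig2, IsOpen V ∧ x ∈ V ∧ ∀ y ∈ omegaLim useqS,
        Filter.limsup (fun n : ℕ =>
          (({i : ℕ | i < n ∧ (iterSet Fsig i y ∩ V).Nonempty}).ncard : ℝ) / n)
          Filter.atTop = 0) := by
  refine ⟨aseq_mem, bseq_mem, ?_, ?_, ?_⟩
  · intro V _ haV
    refine ⟨aseq, aseq_mem, ?_⟩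
    rw [limsup_one_of_fixed iterSet_self_a haV]
    norm_num
  · intro V _ hbV
    refine ⟨bseq, bseq_mem, ?_⟩
    rw [limsup_one_of_fixed iterSet_self_b hbV]
    norm_num
  · intro x _ hxa hxb
    have hKex : ∃ K, x K ≠ x (K+1) := by
      by_contra hcon
      push_neg at hcon
      have hconst : ∀ j, x j = x 0 := by
        intro j
        induction j with
        | zero => rfl
        | succ n ih => rw [← hcon n]; exact ih
      cases hb : x 0 with
      | false => exact hxa (funext fun j => by rw [hconst j, hb]; rfl)
      | true => exact hxb (funext fun j => by rw [hconst j, hb]; rfl)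
    obtain ⟨K, hK⟩ := hKex
    refine ⟨{z : Sig2 | z K = x K ∧ z (K+1) = x (K+1)}, ?_, ⟨rfl, rfl⟩, ?_⟩
    · rw [Metric.isOpen_iff]
      intro z hz
      refine ⟨1 / 2 ^ (K+1), by positivity, fun w hw => ?_⟩
      rw [Metric.mem_ball] at hw
      have hagree := agree_of_dist_lt hw
      exact ⟨(hagree K (by omega)).trans hz.1, (hagree (K+1) le_rfl).trans hz.2⟩
    · intro y hy
      apply Filter.Tendsto.limsup_eq
      apply density_zero hy (K := K)
      · intro z hz h
        apply hK
        rw [← hz.1, ← hz.2]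
        exact h
      · intro hc
        exact hK (hc.1.symm.trans hc.2)
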